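/- Let f : ℝ → ℝ be continuous and let u be a solution of the radial equation on an interval J ⊆ (0,∞). If r₁ ∈ J satisfies I(r₁) < 0, then u(r) ≠ 0 for every r ∈ J with r ≥ r₁. -/

import Mathlib

open Set Filter MeasureTheory

noncomputable def phim (m x : ℝ) : ℝ := |x| ^ (m - 2) * x

noncomputable def Fint (f : ℝ → ℝ) (s : ℝ) : ℝ := ∫ t in (0:ℝ)..s, f t

noncomputable def Qfun (N m : ℝ) (f : ℝ → ℝ) (s : ℝ) : ℝ :=
  m * N * Fint f s - (N - m) * s * f s

/-- `u` (with derivative function `u'`) is a solution of the radial quasilinear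
equation on the set `J`. -/
def IsSolutionOn (N m : ℝ) (f : ℝ → ℝ) (J : Set ℝ) (u u' : ℝ → ℝ) : Prop :=
  (∀ r ∈ J, HasDerivWithinAt u (u' r) J r) ∧ ContinuousOn u' J ∧
    ∃ w' : ℝ → ℝ,
      (∀ r ∈ J ∩ Set.Ioi (0:ℝ),
        HasDerivWithinAt (fun t => phim m (u' t)) (w' r) (J ∩ Set.Ioi (0:ℝ)) r) ∧
      ContinuousOn w' (J ∩ Set.Ioi (0:ℝ)) ∧
      ∀ r ∈ J ∩ Set.Ioi (0:ℝ), w' r + ((N - 1) / r) * phim m (u' r) + f (u r) = 0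

def IsIVPSolutionOn (N m : ℝ) (f : ℝ → ℝ) (α : ℝ) (J : Set ℝ) (u u' : ℝ → ℝ) : Prop :=
  IsSolutionOn N m f J u u' ∧ u 0 = α ∧ u' 0 = 0

/-- Admissible domains for the IVP: `[0,∞)` or `[0,R)` with `0 < R`. -/
def IVPDomain (J : Set ℝ) : Prop :=
  J = Set.Ici (0:ℝ) ∨ ∃ R : ℝ, 0 < R ∧ J = Set.Ico (0:ℝ) R

/-- The solution `u` of the IVP on `J` cannot be extended to a solution on a
strictly larger admissible domain. -/
def Noncontinuable (N m : ℝ) (f : ℝ → ℝ) (α : ℝ) (J : Set ℝ) (u u' : ℝ → ℝ) : Prop :=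
  ∀ J' : Set ℝ, IVPDomain J' → J ⊂ J' →
    ¬ ∃ v v' : ℝ → ℝ, IsIVPSolutionOn N m f α J' v v' ∧ Set.EqOn v u J ∧ Set.EqOn v' u' J

open Classical in
/-- The filter describing the approach to the right endpoint of an IVP domain. -/
noncomputable def domEnd (J : Set ℝ) : Filter ℝ :=
  if J = Set.Ici (0:ℝ) then Filter.atTop else nhdsWithin (sSup J) (Set.Iio (sSup J))

def LocLipschitzOn (f : ℝ → ℝ) (S : Set ℝ) : Prop :=
  ∀ x ∈ S, ∃ ε : ℝ, 0 < ε ∧ ∃ K : NNReal, LipschitzOnWith K f (Metric.ball x ε ∩ S)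

/-- Assumption (f₂). -/
structure Hf2 (f : ℝ → ℝ) (βm βp : ℝ) (γm γp : EReal) : Prop where
  hβm : βm < 0
  hβp : 0 < βp
  hFneg : ∀ s : ℝ, s ∈ Set.Ioo βm βp → s ≠ 0 → Fint f s < 0
  hFβm : Fint f βm = 0
  hFβp : Fint f βp = 0
  hγp : (βp : EReal) < γp
  hγm : γm < (βm : EReal)
  hfpos : ∀ s : ℝ, βp < s → (s : EReal) < γp → 0 < f s
  hfneg : ∀ s : ℝ, γm < (s : EReal) → s < βm → f s < 0
  hγpzero : ∀ s : ℝ, (s : EReal) = γp → f s = 0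
  hγmzero : ∀ s : ℝ, (s : EReal) = γm → f s = 0
  hlim : ∃ L : EReal,
    Filter.Tendsto (fun s : ℝ => (Fint f s : EReal))
      (Filter.comap Real.toEReal (nhdsWithin γp (Set.Iio γp))) (nhds L) ∧
    Filter.Tendsto (fun s : ℝ => (Fint f s : EReal))
      (Filter.comap Real.toEReal (nhdsWithin γm (Set.Ioi γm))) (nhds L)
  hlip : LocLipschitzOn f {s : ℝ | (γm < (s : EReal) ∧ s < 0) ∨ (0 < s ∧ (s : EReal) < γp)}

/-- Assumption (f₃). -/
def Hf3 (N m : ℝ) (f : ℝ → ℝ) (βm βp : ℝ) (γm γp : EReal) : Prop :=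
  (γp = ⊤ →
    (∃ βb : ℝ, βp < βb ∧ ∀ s : ℝ, βb ≤ s → 0 ≤ Qfun N m f s) ∧
    (∃ θ : ℝ, θ ∈ Set.Ioo (0:ℝ) 1 ∧
      Filter.Tendsto (fun s : ℝ =>
        sInf ((fun p : ℝ × ℝ =>
          Qfun N m f p.2 * ((|s| ^ (m - 2) * s) / f p.1) ^ (N / m)) ''
            (Set.Icc (θ * s) s ×ˢ Set.Icc (θ * s) s)))
        Filter.atTop Filter.atTop)) ∧
  (γm = ⊥ →
    (∃ βb : ℝ, -βb < βm ∧ ∀ s : ℝ, s ≤ -βb → 0 ≤ Qfun N m f s) ∧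
    (∃ θ : ℝ, θ ∈ Set.Ioo (0:ℝ) 1 ∧
      Filter.Tendsto (fun s : ℝ =>
        sInf ((fun p : ℝ × ℝ =>
          Qfun N m f p.2 * ((|s| ^ (m - 2) * s) / f p.1) ^ (N / m)) ''
            (Set.Icc s (θ * s) ×ˢ Set.Icc s (θ * s))))
        Filter.atBot Filter.atTop))

/-- Assumption (f₄). -/
def Hf4 (N m : ℝ) (f : ℝ → ℝ) (βm βp : ℝ) (γm γp : EReal) : Prop :=
  (γp ≠ ⊤ → ∃ L₀ : ℝ, 0 < L₀ ∧ ∃ βb : ℝ, βp < βb ∧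
    ∀ s : ℝ, βb ≤ s → (s : EReal) < γp → f s ≤ L₀ * (γp.toReal - s) ^ (m - 1)) ∧
  (γm ≠ ⊥ → ∃ L₀ : ℝ, 0 < L₀ ∧ ∃ βb : ℝ, -βm < βb ∧
    ∀ s : ℝ, γm < (s : EReal) → s ≤ -βb → -f s ≤ L₀ * (s - γm.toReal) ^ (m - 1))

/-- once the energy is negative, the solution can no longer vanish. -/
theorem negative_energy_no_zero
    (N m : ℝ) (hm : 1 < m) (hNm : m ≤ N) (f : ℝ → ℝ) (hf : Continuous f)
    (J : Set ℝ) (hJc : J.OrdConnected) (hJ0 : J ⊆ Set.Ioi (0:ℝ))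
    (u u' : ℝ → ℝ) (hu : IsSolutionOn N m f J u u')
    (r₁ : ℝ) (hr₁ : r₁ ∈ J)
    (hI : |u' r₁| ^ m / (m / (m - 1)) + Fint f (u r₁) < 0) :
    ∀ r ∈ J, r₁ ≤ r → u r ≠ 0 := by
  -- Setup
  obtain ⟨hud, hu'c, w', hwd, hw'c, heq⟩ := hu
  set p : ℝ := m / (m - 1) with hp_def
  have hm1 : (0:ℝ) < m - 1 := by linarith
  have hp1 : 1 < p := by
    rw [hp_def, lt_div_iff₀ hm1]; linarith
  have hJJ : J ∩ Set.Ioi (0:ℝ) = J := Set.inter_eq_left.mpr hJ0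
  rw [hJJ] at hwd hw'c heq
  -- Basic identities about phim
  have habs : ∀ x : ℝ, |phim m x| = |x| ^ (m - 1) := by
    intro x
    rcases eq_or_ne x 0 with rfl | hx
    · simp [phim, Real.zero_rpow (by linarith : m - 1 ≠ 0)]
    · have hx' : (0:ℝ) < |x| := abs_pos.mpr hx
      rw [phim, abs_mul, abs_of_nonneg (Real.rpow_nonneg (abs_nonneg x) _),
        ← Real.rpow_add_one (ne_of_gt hx')]
      ring_nf
  have hA : ∀ x : ℝ, |phim m x| ^ p = |x| ^ m := by
    intro x
    rw [habs, ← Real.rpow_mul (abs_nonneg x)]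
    congr 1
    rw [hp_def]; field_simp
  have hphi : ∀ x : ℝ, |phim m x| ^ (p - 2) * phim m x = x := by
    intro x
    rcases eq_or_ne x 0 with rfl | hx
    · show _ * phim m 0 = (0:ℝ)
      simp [phim]
    · have hx' : (0:ℝ) < |x| := abs_pos.mpr hx
      rw [habs, ← Real.rpow_mul (abs_nonneg x), phim, ← mul_assoc,
        ← Real.rpow_add hx']
      have : (m - 1) * (p - 2) + (m - 2) = 0 := by
        have : (m - 1) * p = m := by rw [hp_def]; field_simp
        nlinarith
      rw [this, Real.rpow_zero, one_mul]
  have hxphi : ∀ x : ℝ, 0 ≤ x * phim m x := by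
    intro x
    have h1 : x * phim m x = |x| ^ (m - 2) * (x * x) := by rw [phim]; ring
    rw [h1]
    exact mul_nonneg (Real.rpow_nonneg (abs_nonneg x) _) (mul_self_nonneg x)
  -- Energy function
  set w : ℝ → ℝ := fun t => phim m (u' t) with hw_def
  set E : ℝ → ℝ := fun t => |w t| ^ p / p + Fint f (u t) with hE_def
  -- derivative of Fint
  have hFd : ∀ s : ℝ, HasDerivAt (Fint f) (f s) s := by
    intro s
    exact intervalIntegral.integral_hasDerivAt_right (hf.intervalIntegrable 0 s)
      (hf.stronglyMeasurable.stronglyMeasurableAtFilter) hf.continuousAt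
  set D : Set ℝ := J ∩ Set.Ici r₁ with hD_def
  have hDJ : D ⊆ J := Set.inter_subset_left
  have hDconv : Convex ℝ D :=
    (Set.OrdConnected.inter hJc Set.ordConnected_Ici).convex
  -- Continuity of E on D
  have hucont : ContinuousOn u J := fun r hr => (hud r hr).continuousWithinAt
  have hwcont : ContinuousOn w J := fun r hr => (hwd r hr).continuousWithinAt
  have hFc : Continuous (Fint f) :=
    continuous_iff_continuousAt.mpr fun s => (hFd s).continuousAt
  have hGc : Continuous (fun s : ℝ => |s| ^ p / p) := by
    have : Continuous (fun s : ℝ => |s| ^ p) :=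
      (Real.continuous_rpow_const (by linarith : (0:ℝ) ≤ p)).comp continuous_abs
    exact this.div_const p
  have hEcont : ContinuousOn E D := by
    apply ContinuousOn.add
    · exact hGc.comp_continuousOn (hwcont.mono hDJ)
    · exact hFc.comp_continuousOn (hucont.mono hDJ)
  -- Derivative of E on interior D
  have hE' : ∀ r ∈ interior D, HasDerivWithinAt E
      (u' r * w' r + f (u r) * u' r) (interior D) r := by
    intro r hr
    have hrD : r ∈ D := interior_subset hr
    have hrJ : J ∈ nhds r := mem_interior_iff_mem_nhds.mp (interior_mono hDJ hr)
    have hu'd : HasDerivAt u (u' r) r := (hud r (hDJ hrD)).hasDerivAt hrJ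
    have hw'd : HasDerivAt w (w' r) r := (hwd r (hDJ hrD)).hasDerivAt hrJ
    have hG : HasDerivAt (fun s : ℝ => |s| ^ p / p) (|w r| ^ (p - 2) * w r) (w r) := by
      have := (hasDerivAt_abs_rpow (w r) hp1).div_const p
      have hpne : p ≠ 0 := by linarith
      have e : p * |w r| ^ (p - 2) * w r / p = |w r| ^ (p - 2) * w r := by
        rw [mul_assoc, mul_div_cancel_left₀ _ hpne]
      rw [e] at this; exact this
    have h1 : HasDerivAt (fun t => |w t| ^ p / p) (|w r| ^ (p - 2) * w r * w' r) r :=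
      hG.comp r hw'd
    have h2 : HasDerivAt (fun t => Fint f (u t)) (f (u r) * u' r) r :=
      (hFd (u r)).comp r hu'd
    have h3 : |w r| ^ (p - 2) * w r = u' r := hphi (u' r)
    have := (h1.add h2)
    rw [h3] at this
    exact this.hasDerivWithinAt
  have hE'neg : ∀ r ∈ interior D, u' r * w' r + f (u r) * u' r ≤ 0 := by
    intro r hr
    have hrD : r ∈ D := interior_subset hr
    have hrJ : r ∈ J := hDJ hrD
    have hrpos : (0:ℝ) < r := hJ0 hrJ
    have heqr := heq r hrJ
    have hw'eq : w' r = -((N - 1) / r) * phim m (u' r) - f (u r) := by linarith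
    have : u' r * w' r + f (u r) * u' r = -((N - 1) / r) * (u' r * phim m (u' r)) := by
      rw [hw'eq]; ring
    rw [this]
    have hN1 : (0:ℝ) ≤ (N - 1) / r := div_nonneg (by linarith) (le_of_lt hrpos)
    have := mul_nonneg hN1 (hxphi (u' r))
    linarith
  have hanti : AntitoneOn E D :=
    antitoneOn_of_hasDerivWithinAt_nonpos hDconv hEcont hE' hE'neg
  -- Conclusion
  intro r hr hle hur
  have hr₁D : r₁ ∈ D := ⟨hr₁, le_refl r₁⟩
  have hrD : r ∈ D := ⟨hr, hle⟩
  have hEle : E r ≤ E r₁ := hanti hr₁D hrD hle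
  have hEr₁ : E r₁ < 0 := by
    have : E r₁ = |u' r₁| ^ m / (m / (m - 1)) + Fint f (u r₁) := by
      rw [hE_def]; simp only [hw_def]
      rw [hA (u' r₁)]
    rw [this]; exact hI
  have hEr : 0 ≤ E r := by
    have hF0 : Fint f (u r) = 0 := by rw [hur]; simp [Fint]
    rw [hE_def]; simp only [hw_def, hF0, add_zero]
    exact div_nonneg (Real.rpow_nonneg (abs_nonneg _) _) (by linarith)
  linarith
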